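/- Any two acyclic orientations of a finite tree are connected by a sequence of source-sink flips, where a source-sink flip reverses all edges incident to a vertex that is a source or a sink. -/

import Mathlib

/-- An orientation of a simple graph `G`: a relation selecting, for each edge of `G`,
exactly one of its two directions, and holding only between adjacent vertices. -/
def IsOrientation {V : Type*} (G : SimpleGraph V) (o : V → V → Prop) : Prop :=
  (∀ u v, o u v → G.Adj u v) ∧ (∀ u v, G.Adj u v → (o u v ↔ ¬ o v u))

/-- `x` is a source of the orientation `o`: no edge points into `x`. -/
def IsSourceVertex {V : Type*} (o : V → V → Prop) (x : V) : Prop := ∀ v, ¬ o v x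

/-- `x` is a sink of the orientation `o`: no edge points out of `x`. -/
def IsSinkVertex {V : Type*} (o : V → V → Prop) (x : V) : Prop := ∀ v, ¬ o x v

/-- The orientation obtained from `o` by reversing all edges incident to `x`. -/
def flipVertex {V : Type*} (o : V → V → Prop) (x : V) : V → V → Prop := fun u v =>
  ((u = x ∨ v = x) ∧ o v u) ∨ (¬ (u = x ∨ v = x) ∧ o u v)

/-- A single source-sink flip relating two orientations. -/
def FlipStep {V : Type*} (o o' : V → V → Prop) : Prop :=
  ∃ x, (IsSourceVertex o x ∨ IsSinkVertex o x) ∧ o' = flipVertex o x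

open SimpleGraph

section Aux
variable {V : Type*}

variable {V : Type*}

lemma flipVertex_flipVertex (o : V → V → Prop) (x : V) :
    flipVertex (flipVertex o x) x = o := by
  funext u v
  by_cases h : u = x ∨ v = x <;> simp only [flipVertex, eq_iff_iff] <;> tauto

lemma flipStep_symm {o o' : V → V → Prop} (h : FlipStep o o') : FlipStep o' o := by
  obtain ⟨x, hx, rfl⟩ := h
  refine ⟨x, ?_, (flipVertex_flipVertex o x).symm⟩
  rcases hx with hs | hs
  · exact Or.inr (fun v hv => by
      rcases hv with ⟨_, h⟩ | ⟨hn, _⟩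
      · exact hs _ h
      · exact hn (Or.inl rfl))
  · exact Or.inl (fun v hv => by
      rcases hv with ⟨_, h⟩ | ⟨hn, _⟩
      · exact hs _ h
      · exact hn (Or.inr rfl))

lemma isOrientation_flip {G : SimpleGraph V} {o : V → V → Prop}
    (h : IsOrientation G o) (x : V) : IsOrientation G (flipVertex o x) := by
  obtain ⟨h1, h2⟩ := h
  constructor
  · rintro u v (⟨_, h⟩ | ⟨_, h⟩)
    · exact (h1 _ _ h).symm
    · exact h1 _ _ h
  · intro u v hadj
    have e1 := h2 u v hadj
    have e2 := h2 v u hadj.symm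
    by_cases hx : u = x ∨ v = x
    · have hx' : v = x ∨ u = x := hx.symm
      simp only [flipVertex, hx, hx', true_and, not_true_eq_false, false_and, or_false]
      tauto
    · have hx' : ¬(v = x ∨ u = x) := fun hh => hx hh.symm
      simp only [flipVertex, hx, hx', false_and, not_false_eq_true, true_and, false_or]
      tauto


variable {G : SimpleGraph V}


lemma tree_adj_dist_ne [DecidableEq V] (hG : G.IsTree) (r : V) {u v : V} (hadj : G.Adj u v) :
    G.dist r u ≠ G.dist r v := by
  intro heq
  obtain ⟨P, hP, hPlen⟩ := hG.isConnected.exists_path_of_dist r u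
  by_cases hv : v ∈ P.support
  · have h1 : G.dist r v ≤ (P.takeUntil v hv).length := dist_le _
    have h2 : (P.takeUntil v hv).length + (P.dropUntil v hv).length = P.length := by
      conv_rhs => rw [← P.take_spec hv]
      rw [Walk.length_append]
    have h3 : 1 ≤ (P.dropUntil v hv).length := by
      rcases Nat.eq_zero_or_pos (P.dropUntil v hv).length with h0 | h0
      · exact absurd (Walk.eq_of_length_eq_zero h0) hadj.ne'
      · exact h0
    omega
  · have hQ : (P.concat hadj).IsPath := by
      rw [← Walk.isPath_reverse_iff, Walk.reverse_concat]
      exact hP.reverse.cons (by simpa using hv)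
    obtain ⟨Q', hQ', hQ'len⟩ := hG.isConnected.exists_path_of_dist r v
    have heqw := (hG.existsUnique_path r v).unique hQ hQ'
    have hlen := congrArg Walk.length heqw
    rw [Walk.length_concat] at hlen
    omega

lemma tree_adj_dist [DecidableEq V] (hG : G.IsTree) (r : V) {u v : V} (hadj : G.Adj u v) :
    G.dist r u + 1 = G.dist r v ∨ G.dist r v + 1 = G.dist r u := by
  have h1 : G.dist r v ≤ G.dist r u + 1 := by
    have := hG.isConnected.dist_triangle (u := r) (v := u) (w := v)
    rwa [dist_eq_one_iff_adj.mpr hadj] at this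
  have h2 : G.dist r u ≤ G.dist r v + 1 := by
    have := hG.isConnected.dist_triangle (u := r) (v := v) (w := u)
    rwa [dist_eq_one_iff_adj.mpr hadj.symm] at this
  have h3 := tree_adj_dist_ne hG r hadj
  omega

lemma tree_parent_unique [DecidableEq V] (hG : G.IsTree) (r : V) {p q v : V}
    (h1 : G.Adj p v) (h2 : G.Adj q v)
    (hp : G.dist r p + 1 = G.dist r v) (hq : G.dist r q + 1 = G.dist r v) : p = q := by
  obtain ⟨Pp, hPp, hPplen⟩ := hG.isConnected.exists_path_of_dist r p
  obtain ⟨Pq, hPq, hPqlen⟩ := hG.isConnected.exists_path_of_dist r q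
  have hvp : v ∉ Pp.support := by
    intro hv
    have := dist_le (Pp.takeUntil v hv)
    have := Pp.length_takeUntil_le hv
    omega
  have hvq : v ∉ Pq.support := by
    intro hv
    have := dist_le (Pq.takeUntil v hv)
    have := Pq.length_takeUntil_le hv
    omega
  have hQp : (Pp.concat h1).IsPath := by
    rw [← Walk.isPath_reverse_iff, Walk.reverse_concat]
    exact hPp.reverse.cons (by simpa using hvp)
  have hQq : (Pq.concat h2).IsPath := by
    rw [← Walk.isPath_reverse_iff, Walk.reverse_concat]
    exact hPq.reverse.cons (by simpa using hvq)
  have heqw := (hG.existsUnique_path r v).unique hQp hQq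
  obtain ⟨hv, -⟩ := Walk.concat_inj heqw
  exact hv

lemma reach_canonical {V : Type*} [Fintype V] [DecidableEq V] (G : SimpleGraph V)
    (hG : G.IsTree) (r : V) (o : V → V → Prop) (h : IsOrientation G o) :
    Relation.ReflTransGen FlipStep o
      (fun u v => G.Adj u v ∧ G.dist r v < G.dist r u) := by
  classical
  set N := Fintype.card V with hN
  set t : (V → V → Prop) → V × V → ℕ := fun o p =>
    if o p.1 p.2 ∧ G.dist r p.1 < G.dist r p.2 then N ^ (N - G.dist r p.2) else 0 with ht
  set Φ : (V → V → Prop) → ℕ := fun o => ∑ p : V × V, t o p with hΦdef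
  suffices H : ∀ n (o : V → V → Prop), IsOrientation G o → Φ o = n →
      Relation.ReflTransGen FlipStep o (fun u v => G.Adj u v ∧ G.dist r v < G.dist r u) from
    H _ o h rfl
  intro n
  induction n using Nat.strong_induction_on with
  | _ n ih =>
  intro o ho hΦ
  by_cases hall : ∀ u v : V, o u v → G.dist r v < G.dist r u
  · have hoeq : o = fun u v => G.Adj u v ∧ G.dist r v < G.dist r u := by
      funext u v
      apply propext
      constructor
      · intro h'
        exact ⟨ho.1 _ _ h', hall _ _ h'⟩
      · rintro ⟨hadj, hlt⟩
        by_contra hno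
        have hvu : o v u := by
          by_contra hno2
          exact hno ((ho.2 u v hadj).mpr hno2)
        have := hall _ _ hvu
        omega
    rw [hoeq]
  · push_neg at hall
    obtain ⟨p₀, v₀, hp₀, hnlt⟩ := hall
    have hS : (Finset.univ.filter
        (fun z => ∃ u, o u z ∧ G.dist r u < G.dist r z)).Nonempty := by
      refine ⟨v₀, ?_⟩
      simp only [Finset.mem_filter, Finset.mem_univ, true_and]
      refine ⟨p₀, hp₀, ?_⟩
      have := tree_adj_dist hG r (ho.1 _ _ hp₀)
      omega
    obtain ⟨v, hvS, hvmax⟩ := Finset.exists_max_image _ (fun z => G.dist r z) hS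
    simp only [Finset.mem_filter, Finset.mem_univ, true_and] at hvS
    obtain ⟨p, hpv, hplt⟩ := hvS
    have hpadj : G.Adj p v := ho.1 _ _ hpv
    have hpdist : G.dist r p + 1 = G.dist r v := by
      have := tree_adj_dist hG r hpadj; omega
    have hsink : IsSinkVertex o v := by
      intro w how
      have hadjvw : G.Adj v w := ho.1 _ _ how
      rcases tree_adj_dist hG r hadjvw with h1 | h2
      · have hwS : w ∈ Finset.univ.filter
            (fun z => ∃ u, o u z ∧ G.dist r u < G.dist r z) := by
          simp only [Finset.mem_filter, Finset.mem_univ, true_and]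
          exact ⟨v, how, by omega⟩
        have := hvmax w hwS
        omega
      · have hwp : w = p := tree_parent_unique hG r hadjvw.symm hpadj h2 hpdist
        subst hwp
        exact (ho.2 v w hadjvw).mp how hpv
    set o' := flipVertex o v with ho'def
    have hstep : FlipStep o o' := ⟨v, Or.inr hsink, rfl⟩
    -- numeric facts
    have hNpos : 0 < N := Fintype.card_pos_iff.mpr ⟨r⟩
    have hdvN : G.dist r v < N := by
      obtain ⟨P, hP, hPlen⟩ := hG.isConnected.exists_path_of_dist r v
      have := hP.length_lt
      omega
    set b : ℕ := N ^ (N - G.dist r v - 1) with hb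
    have hbpos : 0 < b := pow_pos hNpos _
    have hNb : N * b = N ^ (N - G.dist r v) := by
      rw [hb, ← pow_succ']
      congr 1
      omega
    -- the decrease
    have hdec : Φ o' < n := by
      rw [← hΦ]
      have hsplit := Finset.sum_filter_add_sum_filter_not Finset.univ
        (fun q : V × V => q.1 = v ∨ q.2 = v) (t o)
      have hsplit' := Finset.sum_filter_add_sum_filter_not Finset.univ
        (fun q : V × V => q.1 = v ∨ q.2 = v) (t o')
      have heq2 : ∑ q ∈ Finset.univ.filter (fun q : V × V => ¬(q.1 = v ∨ q.2 = v)), t o' q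
          = ∑ q ∈ Finset.univ.filter (fun q : V × V => ¬(q.1 = v ∨ q.2 = v)), t o q := by
        apply Finset.sum_congr rfl
        intro q hq
        simp only [Finset.mem_filter, Finset.mem_univ, true_and] at hq
        simp only [ht, ho'def, flipVertex, hq, false_and, not_false_eq_true, true_and, false_or]
      have hlow : N ^ (N - G.dist r v) ≤
          ∑ q ∈ Finset.univ.filter (fun q : V × V => q.1 = v ∨ q.2 = v), t o q := by
        have hmem : ((p, v) : V × V) ∈
            Finset.univ.filter (fun q : V × V => q.1 = v ∨ q.2 = v) := by
          simp
        have := Finset.single_le_sum (f := t o) (fun i _ => Nat.zero_le _) hmem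
        have hval : t o (p, v) = N ^ (N - G.dist r v) := by
          simp only [ht]
          rw [if_pos ⟨hpv, hplt⟩]
        omega
      have hup : ∑ q ∈ Finset.univ.filter (fun q : V × V => q.1 = v ∨ q.2 = v), t o' q
          ≤ (N - 1) * b := by
        have hterm : ∀ q ∈ Finset.univ.filter (fun q : V × V => q.1 = v ∨ q.2 = v),
            t o' q ≤ (if q.1 = v ∧ q.2 ≠ v then b else 0) := by
          rintro ⟨u, w⟩ hq
          simp only [Finset.mem_filter, Finset.mem_univ, true_and] at hq
          by_cases hw : w = v
          · subst hw
            have : ¬ o' u w := by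
              intro hcon
              rcases hcon with ⟨_, hcc⟩ | ⟨hnn, _⟩
              · exact hsink _ hcc
              · exact hnn (Or.inr rfl)
            simp only [ht]
            rw [if_neg (fun hc => this hc.1)]
            exact Nat.zero_le _
          · have hu : u = v := by tauto
            subst hu
            simp only [hw, ne_eq, not_false_eq_true, and_true, if_pos rfl]
            simp only [ht]
            split_ifs with hc
            · obtain ⟨hc1, hc2⟩ := hc
              apply Nat.pow_le_pow_right hNpos
              omega
            · exact Nat.zero_le _
        calc ∑ q ∈ Finset.univ.filter (fun q : V × V => q.1 = v ∨ q.2 = v), t o' q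
            ≤ ∑ q ∈ Finset.univ.filter (fun q : V × V => q.1 = v ∨ q.2 = v),
              (if q.1 = v ∧ q.2 ≠ v then b else 0) := Finset.sum_le_sum hterm
          _ ≤ ∑ q : V × V, (if q.1 = v ∧ q.2 ≠ v then b else 0) :=
              Finset.sum_le_sum_of_subset (Finset.filter_subset _ _)
          _ = ∑ w : V, (if w ≠ v then b else 0) := by
              rw [Fintype.sum_prod_type]
              rw [Finset.sum_eq_single v]
              · apply Finset.sum_congr rfl
                intro w _
                simp
              · intro u _ hu
                apply Finset.sum_eq_zero
                intro w _
                simp [hu]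
              · simp
          _ = (N - 1) * b := by
              rw [Finset.sum_ite, Finset.sum_const, Finset.sum_const, smul_eq_mul,
                smul_eq_mul, mul_zero, add_zero]
              congr 1
              have : Finset.univ.filter (fun w : V => w ≠ v) = Finset.univ.erase v := by
                ext w; simp [and_comm]
              rw [this, Finset.card_erase_of_mem (Finset.mem_univ v), Finset.card_univ]
      have hstrict : (N - 1) * b < N ^ (N - G.dist r v) := by
        rw [← hNb]
        have : (N - 1) * b < N * b := by
          apply Nat.mul_lt_mul_of_lt_of_le (by omega) le_rfl hbpos
        exact this
      have e1 : Φ o = ∑ x : V × V, t o x := rfl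
      have e2 : Φ o' = ∑ x : V × V, t o' x := rfl
      omega
    exact Relation.ReflTransGen.head hstep
      (ih (Φ o') hdec o' (isOrientation_flip ho v) rfl)

end Aux

/-- Any two (acyclic) orientations of a finite tree are connected by a sequence of
source-sink flips. -/
theorem tree_orientations_connected_by_flips
    {V : Type*} [Fintype V] (G : SimpleGraph V) (hG : G.IsTree)
    (o₁ o₂ : V → V → Prop) (h₁ : IsOrientation G o₁) (h₂ : IsOrientation G o₂) :
    Relation.ReflTransGen FlipStep o₁ o₂ := by
  classical
  obtain ⟨r⟩ : Nonempty V := hG.isConnected.nonempty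
  have H1 := reach_canonical G hG r o₁ h₁
  have H2 := reach_canonical G hG r o₂ h₂
  exact H1.trans
    ((@Relation.ReflTransGen.symmetric _ _ ⟨fun _ _ h => flipStep_symm h⟩).symm _ _ H2)
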